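/- Let M be an m-outcome POVM in dimension d, let K be a valid decomposition of M, let a ≠ b be indices in Fin m, and let c > 0 be a real number such that K a b − c•𝟙 is positive semidefinite. Define K' to agree with K except K' a b = K a b − c•𝟙 and K' a a = K a a + c•𝟙. Then K' is a valid decomposition of M, and for every unit vector φ ∈ ℂ^d the objective satisfies ∑_j ⟪φ, (K' j j)·φ⟫ = ∑_j ⟪φ, (K j j)·φ⟫ + c. (In particular, no decomposition maximizing the objective can have a positive definite off-diagonal element K a b with a ≠ b.) -/

import Mathlib

open Matrix ComplexOrder

noncomputable section

/-- `K` is a valid decomposition of the POVM `M`. -/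
def IsDecomp {m d : ℕ} (M : Fin m → Matrix (Fin d) (Fin d) ℂ)
    (K : Fin m → Fin m → Matrix (Fin d) (Fin d) ℂ) : Prop :=
  (∀ x j, (K x j).PosSemidef) ∧
  (∀ j, (d : ℂ) • ∑ x, K x j = (∑ x, (K x j).trace) • (1 : Matrix (Fin d) (Fin d) ℂ)) ∧
  (∀ x, ∑ j, K x j = M x)

/-- Eve's objective for the decomposition `K` and the state `φ`:
`∑_j ⟪φ, (K j j) φ⟫`. -/
def objective {m d : ℕ} (K : Fin m → Fin m → Matrix (Fin d) (Fin d) ℂ)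
    (φ : Fin d → ℂ) : ℝ :=
  ∑ j, (star φ ⬝ᵥ (K j j).mulVec φ).re

lemma smul_one_posSemidef {d : ℕ} {c : ℝ} (hc : 0 ≤ c) :
    ((c : ℂ) • (1 : Matrix (Fin d) (Fin d) ℂ)).PosSemidef := by
  constructor
  · show _ = _
    simp [conjTranspose_smul, Complex.star_def, Complex.conj_ofReal]
  · intro x
    exact (PosSemidef.one.smul (Complex.zero_le_real.mpr hc)).2 x

lemma psd_add {d : ℕ} {A B : Matrix (Fin d) (Fin d) ℂ}
    (hA : A.PosSemidef) (hB : B.PosSemidef) : (A + B).PosSemidef := by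
  refine ⟨hA.1.add hB.1, fun x => ?_⟩
  exact (hA.add hB).2 x

/-- Shifting a full-rank off-diagonal element: if `K a b − c·𝟙` is positive semidefinite
(`a ≠ b`, `c > 0`), then moving `c·𝟙` from `K a b` to `K a a` yields a valid decomposition
whose objective at every unit state is larger by exactly `c`. -/
theorem improve_decomposition_identity_shift
    {m d : ℕ}
    (M : Fin m → Matrix (Fin d) (Fin d) ℂ)
    (hpsd : ∀ x, (M x).PosSemidef) (hsum : ∑ x, M x = 1)
    (K : Fin m → Fin m → Matrix (Fin d) (Fin d) ℂ) (hK : IsDecomp M K)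
    (a b : Fin m) (hab : a ≠ b) (c : ℝ) (hc : 0 < c)
    (hpos : (K a b - (c : ℂ) • (1 : Matrix (Fin d) (Fin d) ℂ)).PosSemidef) :
    let K' : Fin m → Fin m → Matrix (Fin d) (Fin d) ℂ := fun x j =>
      if x = a ∧ j = b then K a b - (c : ℂ) • (1 : Matrix (Fin d) (Fin d) ℂ)
      else if x = a ∧ j = a then K a a + (c : ℂ) • (1 : Matrix (Fin d) (Fin d) ℂ)
      else K x j
    IsDecomp M K' ∧
      ∀ φ : Fin d → ℂ, star φ ⬝ᵥ φ = 1 → objective K' φ = objective K φ + c := by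
  intro K'
  obtain ⟨hK1, hK2, hK3⟩ := hK
  have hcpsd : ((c : ℂ) • (1 : Matrix (Fin d) (Fin d) ℂ)).PosSemidef :=
    smul_one_posSemidef hc.le
  -- pointwise description of K'
  have hK'eq : ∀ x j, K' x j
      = K x j + (if x = a ∧ j = a then (c : ℂ) • 1 else 0)
              - (if x = a ∧ j = b then (c : ℂ) • 1 else 0) := by
    intro x j
    by_cases hx : x = a
    · by_cases hjb : j = b
      · simp [K', hx, hjb, Ne.symm hab, sub_eq_add_neg]
      · by_cases hja : j = a
        · simp [K', hx, hjb, hja, hab]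
        · simp [K', hx, hjb, hja]
    · simp [K', hx]
  constructor
  · refine ⟨?_, ?_, ?_⟩
    · intro x j
      by_cases hx : x = a
      · by_cases hjb : j = b
        · simpa [K', hx, hjb, Ne.symm hab] using hpos
        · by_cases hja : j = a
          · simpa [K', hx, hjb, hja, hab] using psd_add (hK1 a a) hcpsd
          · simpa [K', hx, hjb, hja] using hK1 x j
      · simpa [K', hx] using hK1 x j
    · intro j
      have hsum' : ∑ x, K' x j = (∑ x, K x j)
          + (if j = a then (c : ℂ) • 1 else 0) - (if j = b then (c : ℂ) • 1 else 0) := by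
        simp only [hK'eq]
        rw [Finset.sum_sub_distrib, Finset.sum_add_distrib]
        congr 1
        · congr 1
          rw [show (fun x => if x = a ∧ j = a then (c : ℂ) • (1 : Matrix (Fin d) (Fin d) ℂ) else 0)
              = fun x => if x = a then (if j = a then (c : ℂ) • 1 else 0) else 0 by
              funext x; by_cases hx : x = a <;> simp [hx]]
          rw [Finset.sum_ite_eq' Finset.univ a]
          simp
        · rw [show (fun x => if x = a ∧ j = b then (c : ℂ) • (1 : Matrix (Fin d) (Fin d) ℂ) else 0)
              = fun x => if x = a then (if j = b then (c : ℂ) • 1 else 0) else 0 by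
              funext x; by_cases hx : x = a <;> simp [hx]]
          rw [Finset.sum_ite_eq' Finset.univ a]
          simp
      have htr : ∑ x, (K' x j).trace = (∑ x, (K x j).trace)
          + (if j = a then (c * d : ℂ) else 0) - (if j = b then (c * d : ℂ) else 0) := by
        simp only [hK'eq, trace_sub, trace_add]
        rw [Finset.sum_sub_distrib, Finset.sum_add_distrib]
        congr 1
        · congr 1
          rw [show (fun x => ((if x = a ∧ j = a then (c : ℂ) • (1 : Matrix (Fin d) (Fin d) ℂ) else 0)).trace)
              = fun x => if x = a then (if j = a then (c * d : ℂ) else 0) else 0 by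
              funext x; by_cases hx : x = a <;> by_cases hj : j = a <;>
                simp [hx, hj, trace_smul, trace_one, smul_eq_mul]]
          rw [Finset.sum_ite_eq' Finset.univ a]
          simp
        · rw [show (fun x => ((if x = a ∧ j = b then (c : ℂ) • (1 : Matrix (Fin d) (Fin d) ℂ) else 0)).trace)
              = fun x => if x = a then (if j = b then (c * d : ℂ) else 0) else 0 by
              funext x; by_cases hx : x = a <;> by_cases hj : j = b <;>
                simp [hx, hj, trace_smul, trace_one, smul_eq_mul]]
          rw [Finset.sum_ite_eq' Finset.univ a]
          simp
      rw [hsum', htr, smul_sub, smul_add, hK2 j, sub_smul, add_smul]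
      congr 1
      · congr 1
        by_cases hj : j = a
        · simp only [hj, if_true]
          rw [smul_smul, mul_comm]
        · simp [hj]
      · by_cases hj : j = b
        · simp only [hj, if_true]
          rw [smul_smul, mul_comm]
        · simp [hj]
    · intro x
      by_cases hx : x = a
      · rw [← hK3 x]
        simp only [hK'eq]
        rw [Finset.sum_sub_distrib, Finset.sum_add_distrib]
        rw [show (fun j => if x = a ∧ j = a then (c : ℂ) • (1 : Matrix (Fin d) (Fin d) ℂ) else 0)
            = fun j => if j = a then (c : ℂ) • 1 else 0 by
            funext j; by_cases hj : j = a <;> simp [hj, hx]]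
        rw [show (fun j => if x = a ∧ j = b then (c : ℂ) • (1 : Matrix (Fin d) (Fin d) ℂ) else 0)
            = fun j => if j = b then (c : ℂ) • 1 else 0 by
            funext j; by_cases hj : j = b <;> simp [hj, hx]]
        rw [Finset.sum_ite_eq' Finset.univ a, Finset.sum_ite_eq' Finset.univ b]
        simp
      · rw [← hK3 x]
        apply Finset.sum_congr rfl
        intro j _
        simp [hK'eq, hx]
  · intro φ hφ
    have hK'd : ∀ j, K' j j = K j j + (if j = a then (c : ℂ) • 1 else 0) := by
      intro j
      rw [hK'eq j j]
      by_cases hj : j = a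
      · simp [hj, hab, Ne.symm hab]
      · simp [hj]
    unfold objective
    simp only [hK'd]
    have key : ∀ x : Fin m, (star φ ⬝ᵥ (K x x + if x = a then (c : ℂ) • 1 else 0) *ᵥ φ).re
        = (star φ ⬝ᵥ (K x x) *ᵥ φ).re + (if x = a then c else 0) := by
      intro x
      by_cases hx : x = a
      · simp only [hx, if_true, add_mulVec, dotProduct_add, Complex.add_re,
          smul_mulVec, one_mulVec, dotProduct_smul, hφ]
        norm_num
      · simp [hx]
    simp only [key]
    rw [Finset.sum_add_distrib, Finset.sum_ite_eq' Finset.univ a]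
    simp
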